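/- Let {e₁,…,eₙ} be a g-orthonormal basis of V adapted to the decomposition V = V₀ ⊕ V₁ (eigenspaces of the grading automorphism α restricted to V). Then the even part Cℓ₀ is generated as an algebra by the elements eᵢ with eᵢ ∈ V₀ together with the products eᵢeⱼ with eᵢ, eⱼ ∈ V₁. -/

import Mathlib

open CliffordAlgebra

/-- Let `{e₁,…,eₙ}` be a `g`-orthonormal basis of `V` adapted to the decomposition
`V = V₀ ⊕ V₁` induced by a Z₂-grading preserving the multivector structure.
Then the even part `Cℓ₀` is generated as an algebra by the vectors `eᵢ ∈ V₀`
together with the products `eᵢeⱼ` with `eᵢ, eⱼ ∈ V₁`. -/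
theorem even_part_generated_by_even_vectors_and_products_of_odd_vectors
    {V : Type*} [AddCommGroup V] [Module ℝ V] [FiniteDimensional ℝ V]
    (B : LinearMap.BilinForm ℝ V) (hsymm : B.IsSymm) (hnd : B.Nondegenerate)
    (A0 A1 : Submodule ℝ (CliffordAlgebra B.toQuadraticMap))
    (hsup : A0 ⊔ A1 = ⊤) (hdisj : A0 ⊓ A1 = ⊥)
    (h00 : ∀ a ∈ A0, ∀ b ∈ A0, a * b ∈ A0)
    (h01 : ∀ a ∈ A0, ∀ b ∈ A1, a * b ∈ A1)
    (h10 : ∀ a ∈ A1, ∀ b ∈ A0, a * b ∈ A1)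
    (h11 : ∀ a ∈ A1, ∀ b ∈ A1, a * b ∈ A0)
    (hpres : ∀ v : V, ∃ v0 v1 : V, ι B.toQuadraticMap v0 ∈ A0 ∧
      ι B.toQuadraticMap v1 ∈ A1 ∧ v = v0 + v1)
    {n : ℕ} (e : Module.Basis (Fin n) ℝ V)
    (horth : ∀ i j, i ≠ j → B (e i) (e j) = 0)
    (hnorm : ∀ i, B (e i) (e i) = 1 ∨ B (e i) (e i) = -1)
    (hadapted : ∀ i, ι B.toQuadraticMap (e i) ∈ A0 ∨ ι B.toQuadraticMap (e i) ∈ A1) :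
    Subalgebra.toSubmodule (Algebra.adjoin ℝ
      ({x | ∃ i, ι B.toQuadraticMap (e i) ∈ A0 ∧ x = ι B.toQuadraticMap (e i)} ∪
       {x | ∃ i j, ι B.toQuadraticMap (e i) ∈ A1 ∧ ι B.toQuadraticMap (e j) ∈ A1 ∧
          x = ι B.toQuadraticMap (e i) * ι B.toQuadraticMap (e j)})) = A0 := by
  set G : Set (CliffordAlgebra B.toQuadraticMap) :=
    ({x | ∃ i, ι B.toQuadraticMap (e i) ∈ A0 ∧ x = ι B.toQuadraticMap (e i)} ∪
     {x | ∃ i j, ι B.toQuadraticMap (e i) ∈ A1 ∧ ι B.toQuadraticMap (e j) ∈ A1 ∧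
        x = ι B.toQuadraticMap (e i) * ι B.toQuadraticMap (e j)}) with hG
  set P : Subalgebra ℝ (CliffordAlgebra B.toQuadraticMap) := Algebra.adjoin ℝ G with hP
  -- 1 ∈ A0
  have hone : (1 : CliffordAlgebra B.toQuadraticMap) ∈ A0 := by
    have h1 : (1 : CliffordAlgebra B.toQuadraticMap) ∈ A0 ⊔ A1 := hsup ▸ Submodule.mem_top
    obtain ⟨a, ha, b, hb, hab⟩ := Submodule.mem_sup.mp h1
    -- a * 1 = a² + a*b  ⇒ a*b = a - a² ∈ A0 ⊓ A1 = 0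
    have hab0 : a * b = 0 := by
      have h1 : a * b = a - a * a := by
        have h := congrArg (a * ·) hab
        simp only [mul_add, mul_one] at h
        exact eq_sub_of_add_eq' h
      have h2 : a * b ∈ A0 ⊓ A1 := by
        refine ⟨?_, h01 a ha b hb⟩
        rw [h1]; exact A0.sub_mem ha (h00 a ha a ha)
      rw [hdisj] at h2; exact h2
    have hbb0 : b * b = 0 := by
      have h1 : b * b = b - b * a := by
        have h := congrArg (b * ·) hab
        simp only [mul_add, mul_one] at h
        exact eq_sub_of_add_eq' h
      have h2 : b * b ∈ A0 ⊓ A1 := by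
        refine ⟨h11 b hb b hb, ?_⟩
        rw [h1]; exact A1.sub_mem hb (h10 b hb a ha)
      rw [hdisj] at h2; exact h2
    have hb0 : b = 0 := by
      have := congrArg (· * b) hab
      simp only [add_mul, one_mul] at this
      rw [hab0, hbb0] at this
      simpa using this.symm
    rw [← hab, hb0, add_zero]; exact ha
  -- P ≤ A0 (as submodules)
  have hPle : ∀ x ∈ P, x ∈ A0 := by
    intro x hx
    induction hx using Algebra.adjoin_induction with
    | mem y hy =>
      rcases hy with ⟨i, hi, rfl⟩ | ⟨i, j, hi, hj, rfl⟩
      · exact hi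
      · exact h11 _ hi _ hj
    | algebraMap r =>
      rw [Algebra.algebraMap_eq_smul_one]; exact A0.smul_mem r hone
    | add x y _ _ hx hy => exact A0.add_mem hx hy
    | mul x y _ _ hx hy => exact h00 x hx y hy
  -- the odd companion
  set O : Submodule ℝ (CliffordAlgebra B.toQuadraticMap) :=
    Submodule.span ℝ {x | ∃ i p, ι B.toQuadraticMap (e i) ∈ A1 ∧ p ∈ P ∧ x = ι B.toQuadraticMap (e i) * p} with hO
  have hOle : ∀ x ∈ O, x ∈ A1 := by
    intro x hx
    refine Submodule.span_le.mpr ?_ hx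
    rintro y ⟨i, p, hi, hp, rfl⟩
    exact h10 _ hi _ (hPle p hp)
  set T : Submodule ℝ (CliffordAlgebra B.toQuadraticMap) := Subalgebra.toSubmodule P ⊔ O with hT
  have hPT : ∀ x ∈ P, x ∈ T := fun x hx => Submodule.mem_sup_left hx
  have hOT : ∀ x ∈ O, x ∈ T := fun x hx => Submodule.mem_sup_right hx
  -- key closure: ι (e i) * T ⊆ T
  have hanticomm : ∀ i j, i ≠ j →
      ι B.toQuadraticMap (e i) * ι B.toQuadraticMap (e j) = - (ι B.toQuadraticMap (e j) * ι B.toQuadraticMap (e i)) := by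
    intro i j hij
    have h := ι_mul_ι_add_swap (Q := B.toQuadraticMap) (e i) (e j)
    rw [LinearMap.BilinMap.polar_toQuadraticMap, horth i j hij, horth j i (Ne.symm hij)]
      at h
    simp only [add_zero, map_zero] at h
    exact eq_neg_of_add_eq_zero_left h
  have hPmem : ∀ i, ι B.toQuadraticMap (e i) ∈ A0 → ι B.toQuadraticMap (e i) ∈ P := by
    intro i hi
    exact Algebra.subset_adjoin (Or.inl ⟨i, hi, rfl⟩)
  have hkeyO : ∀ i, ∀ o ∈ O, ι B.toQuadraticMap (e i) * o ∈ T := by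
    intro i o ho
    induction ho using Submodule.span_induction with
      | mem x hx =>
        obtain ⟨j, p, hj, hp, rfl⟩ := hx
        rcases hadapted i with hi | hi
        · -- even i : anticommute (or i = j degenerate)
          by_cases hij : i = j
          · subst hij
            have : ι B.toQuadraticMap (e i) ∈ A0 ⊓ A1 := ⟨hi, hj⟩
            rw [hdisj] at this
            rw [← mul_assoc, this]
            simpa using T.zero_mem
          · rw [← mul_assoc, hanticomm i j hij, neg_mul, mul_assoc]
            exact T.neg_mem (hOT _ (Submodule.subset_span
              ⟨j, ι B.toQuadraticMap (e i) * p, hj, P.mul_mem (hPmem i hi) hp, rfl⟩))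
        · -- odd i : ι(e i) * ι(e j) ∈ P
          rw [← mul_assoc]
          exact hPT _ (P.mul_mem (Algebra.subset_adjoin (Or.inr ⟨i, j, hi, hj, rfl⟩)) hp)
      | zero => simpa using T.zero_mem
      | add x z hx hz ihx ihz => rw [mul_add]; exact T.add_mem ihx ihz
      | smul r x hx ihx => rw [mul_smul_comm]; exact T.smul_mem r ihx
  have hkey : ∀ i, ∀ y ∈ T, ι B.toQuadraticMap (e i) * y ∈ T := by
    intro i y hy
    obtain ⟨q, hq, o, ho, rfl⟩ := Submodule.mem_sup.mp hy
    rw [mul_add]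
    refine T.add_mem ?_ (hkeyO i o ho)
    rcases hadapted i with hi | hi
    · exact hPT _ (P.mul_mem (hPmem i hi) hq)
    · exact hOT _ (Submodule.subset_span ⟨i, q, hi, hq, rfl⟩)
  -- T = ⊤ by Clifford induction
  have htop : ∀ x : CliffordAlgebra B.toQuadraticMap, x ∈ T ∧ ∀ y ∈ T, x * y ∈ T := by
    intro x
    induction x using CliffordAlgebra.induction with
    | algebraMap r =>
      constructor
      · rw [Algebra.algebraMap_eq_smul_one]
        exact T.smul_mem r (hPT 1 P.one_mem)
      · intro y hy
        rw [Algebra.algebraMap_eq_smul_one, smul_mul_assoc, one_mul]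
        exact T.smul_mem r hy
    | ι v =>
      have hv : ι B.toQuadraticMap v = ∑ i, e.repr v i • ι B.toQuadraticMap (e i) := by
        conv_lhs => rw [← e.sum_repr v]
        simp only [map_sum, map_smul]
      constructor
      · rw [hv]
        refine T.sum_mem fun i _ => T.smul_mem _ ?_
        rcases hadapted i with hi | hi
        · exact hPT _ (hPmem i hi)
        · exact hOT _ (Submodule.subset_span ⟨i, 1, hi, P.one_mem, (mul_one _).symm⟩)
      · intro y hy
        rw [hv, Finset.sum_mul]
        refine T.sum_mem fun i _ => ?_
        rw [smul_mul_assoc]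
        exact T.smul_mem _ (hkey i y hy)
    | mul a b iha ihb =>
      refine ⟨?_, fun y hy => ?_⟩
      · exact iha.2 b ihb.1
      · rw [mul_assoc]; exact iha.2 _ (ihb.2 y hy)
    | add a b iha ihb =>
      refine ⟨T.add_mem iha.1 ihb.1, fun y hy => ?_⟩
      rw [add_mul]; exact T.add_mem (iha.2 y hy) (ihb.2 y hy)
  -- conclude
  apply le_antisymm
  · intro x hx; exact hPle x hx
  · intro x hx
    obtain ⟨q, hq, o, ho, hqo⟩ := Submodule.mem_sup.mp ((htop x).1)
    have ho0 : o = 0 := by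
      have : o ∈ A0 ⊓ A1 := by
        refine ⟨?_, hOle o ho⟩
        rw [eq_sub_of_add_eq' hqo]; exact A0.sub_mem hx (hPle q hq)
      rw [hdisj] at this; exact this
    rw [← hqo, ho0, add_zero]
    exact hq
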